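/- Let A be an additive abelian group and let γ₁, γ₂, δ be endogenies of A. Then (γ₁ + γ₂) ∘ δ ∼ γ₁ ∘ δ + γ₂ ∘ δ; i.e., left-distributivity holds modulo the equivalence of endogenies. -/

import Mathlib

open Pointwise

variable {A : Type*} [AddCommGroup A]

/-- The fibre `γ[a]` of a relation `γ ⊆ A × A` over `a`. -/
def fib (γ : Set (A × A)) (a : A) : Set A := {b | (a, b) ∈ γ}

/-- The image `γ[S]` of a set `S ⊆ A` under a relation `γ ⊆ A × A`. -/
def eimg (γ : Set (A × A)) (S : Set A) : Set A := {b | ∃ a ∈ S, (a, b) ∈ γ}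

/-- The katakernel `kat γ = γ[0]`. -/
def kat (γ : Set (A × A)) : Set A := {b | ((0 : A), b) ∈ γ}

/-- The image `im γ = γ[A]`. -/
def eim (γ : Set (A × A)) : Set A := {b | ∃ a, (a, b) ∈ γ}

/-- `γ` is (the carrier of) an additive subgroup of `A × A`. -/
def IsAddSubgroupSet (γ : Set (A × A)) : Prop :=
  (0 : A × A) ∈ γ ∧ (∀ p ∈ γ, ∀ q ∈ γ, p + q ∈ γ) ∧ (∀ p ∈ γ, -p ∈ γ)

/-- An endogeny of `A`: an additive subgroup of `A × A` projecting onto `A`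
with finite katakernel. -/
def IsEndogeny (γ : Set (A × A)) : Prop :=
  IsAddSubgroupSet γ ∧ (∀ a : A, ∃ b : A, (a, b) ∈ γ) ∧ (kat γ).Finite

/-- Pointwise sum of endogenies. -/
def esum (γ₁ γ₂ : Set (A × A)) : Set (A × A) :=
  {p | ∃ b₁ b₂ : A, (p.1, b₁) ∈ γ₁ ∧ (p.1, b₂) ∈ γ₂ ∧ p.2 = b₁ + b₂}

/-- Pointwise negation of an endogeny. -/
def eneg (γ : Set (A × A)) : Set (A × A) := {p | (p.1, -p.2) ∈ γ}

/-- Pointwise difference of endogenies. -/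
def esub (γ₁ γ₂ : Set (A × A)) : Set (A × A) := esum γ₁ (eneg γ₂)

/-- Composition of endogenies (as relations): `(a, c) ∈ γ₁ ∘ γ₂` iff
`∃ b, b ∈ γ₂[a]` and `c ∈ γ₁[b]`. -/
def ecomp (γ₁ γ₂ : Set (A × A)) : Set (A × A) :=
  {p | ∃ b : A, (p.1, b) ∈ γ₂ ∧ (b, p.2) ∈ γ₁}

/-- Sharp commutation: `im (γ ∘ δ − δ ∘ γ) ⊆ kat γ + kat δ`. -/
def SharpCommute (γ δ : Set (A × A)) : Prop :=
  eim (esub (ecomp γ δ) (ecomp δ γ)) ⊆ kat γ + kat δ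

/-- Equivalence of endogenies: they agree modulo a finite subgroup. -/
def EEquiv (γ₁ γ₂ : Set (A × A)) : Prop :=
  ∃ F : AddSubgroup A, (F : Set A).Finite ∧
    ∀ a : A, fib γ₁ a + (F : Set A) = fib γ₂ a + (F : Set A)

/-- A prering of endogenies: a set of endogenies closed under `+`, `−` and `∘`. -/
def IsPrering (Γ : Set (Set (A × A))) : Prop :=
  (∀ γ ∈ Γ, IsEndogeny γ) ∧ (∀ γ ∈ Γ, ∀ δ ∈ Γ, esum γ δ ∈ Γ) ∧
  (∀ γ ∈ Γ, eneg γ ∈ Γ) ∧ (∀ γ ∈ Γ, ∀ δ ∈ Γ, ecomp γ δ ∈ Γ)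

/-- The katakernel of a prering: the subgroup generated by all the katakernels. -/
def Kat (Γ : Set (Set (A × A))) : AddSubgroup A :=
  AddSubgroup.closure (⋃ γ ∈ Γ, kat γ)

/-- left-distributivity holds modulo equivalence of endogenies:
`(γ₁ + γ₂) ∘ δ ∼ γ₁ ∘ δ + γ₂ ∘ δ`. -/
theorem left_distrib_mod_equiv (γ₁ γ₂ δ : Set (A × A))
    (h₁ : IsEndogeny γ₁) (h₂ : IsEndogeny γ₂) (hδ : IsEndogeny δ) :
    EEquiv (ecomp (esum γ₁ γ₂) δ) (esum (ecomp γ₁ δ) (ecomp γ₂ δ)) := by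
  obtain ⟨⟨hz₁, hadd₁, hneg₁⟩, hsur₁, hfin₁⟩ := h₁
  obtain ⟨⟨hz₂, hadd₂, hneg₂⟩, hsur₂, hfin₂⟩ := h₂
  obtain ⟨⟨hzδ, haddδ, hnegδ⟩, hsurδ, hfinδ⟩ := hδ
  refine ⟨{ carrier := {d | ∃ k ∈ kat δ, (k, d) ∈ γ₂}
            zero_mem' := ⟨0, hzδ, hz₂⟩
            add_mem' := ?_
            neg_mem' := ?_ }, ?_, ?_⟩
  · rintro x y ⟨k, hk, hx⟩ ⟨k', hk', hy⟩
    refine ⟨k + k', ?_, ?_⟩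
    · have := haddδ _ hk _ hk'
      simpa [kat] using this
    · have := hadd₂ _ hx _ hy
      simpa using this
  · rintro x ⟨k, hk, hx⟩
    exact ⟨-k, by simpa [kat] using hnegδ _ hk, by simpa using hneg₂ _ hx⟩
  · -- finiteness of G
    have hfibfin : ∀ k : A, (fib γ₂ k).Finite := by
      intro k
      obtain ⟨d0, hd0⟩ := hsur₂ k
      apply Set.Finite.subset (hfin₂.image (fun t => d0 + t))
      intro d hd
      refine ⟨d - d0, ?_, by simp⟩
      have := hadd₂ _ hd _ (hneg₂ _ hd0)
      simpa [kat, sub_eq_add_neg] using this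
    have : {d | ∃ k ∈ kat δ, (k, d) ∈ γ₂} ⊆ ⋃ k ∈ kat δ, fib γ₂ k := by
      rintro d ⟨k, hk, hkd⟩
      exact Set.mem_biUnion hk hkd
    exact Set.Finite.subset (Set.Finite.biUnion hfinδ fun k _ => hfibfin k) this
  · intro a
    apply Set.Subset.antisymm
    · rintro x ⟨c, hc, d, hd, rfl⟩
      obtain ⟨b, hb, b₁, b₂, hb₁, hb₂, hc2⟩ := hc
      exact ⟨c, ⟨b₁, b₂, ⟨b, hb, hb₁⟩, ⟨b, hb, hb₂⟩, hc2⟩, d, hd, rfl⟩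
    · rintro x ⟨c, hc, d, hd, rfl⟩
      obtain ⟨c₁, c₂, ⟨b, hb, hbc₁⟩, ⟨b', hb', hbc₂⟩, rfl⟩ := hc
      -- k = b' - b ∈ kat δ
      have hk : (b' - b) ∈ kat δ := by
        have := haddδ _ hb' _ (hnegδ _ hb)
        simpa [kat, sub_eq_add_neg] using this
      obtain ⟨e, he⟩ := hsur₂ (b' - b)
      have heG : e ∈ {d | ∃ k ∈ kat δ, (k, d) ∈ γ₂} := ⟨b' - b, hk, he⟩
      have hbc₂' : (b, c₂ - e) ∈ γ₂ := by
        have := hadd₂ _ hbc₂ _ (hneg₂ _ he)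
        have h2 : ((b', c₂) + -(b' - b, e) : A × A) = (b, c₂ - e) := by
          ext <;> simp [sub_eq_add_neg]
        rwa [h2] at this
      refine ⟨c₁ + (c₂ - e), ⟨b, hb, c₁, c₂ - e, hbc₁, hbc₂', rfl⟩,
        e + d, ?_, by abel⟩
      rcases hd with hd
      rcases heG with ⟨k, hk', hke⟩
      rcases hd with ⟨k', hk'', hk'd⟩
      refine ⟨k + k', ?_, ?_⟩
      · have := haddδ _ hk' _ hk''
        simpa [kat] using this
      · have := hadd₂ _ hke _ hk'd
        simpa using this
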